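/- Let G and H be groups with G a subgroup of H of finite index l, and let C be a finite set of right coset representatives with 1 ∈ C. For u ∈ H and c, d ∈ C, the set {z ∈ ℕ | c·u^z·d⁻¹ ∈ G} is eventually periodic with period at most l and threshold at most l: there exist k with 1 ≤ k ≤ l such that for all z ≥ l, c·u^z·d⁻¹ ∈ G iff c·u^{z+k}·d⁻¹ ∈ G. -/
import Mathlib


theorem coset_membership_eventually_periodic {H : Type*} [Group H] (G : Subgroup H)
    (l : ℕ) (hl : G.index = l) (hl0 : 0 < l)
    (C : Finset H) (h1 : (1 : H) ∈ C) (hcard : C.card = l)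
    (hrep : ∀ h : H, ∃! c : H, c ∈ C ∧ h * c⁻¹ ∈ G)
    (u : H) (c d : H) (hc : c ∈ C) (hd : d ∈ C) :
    ∃ k : ℕ, 1 ≤ k ∧ k ≤ l ∧
      ∀ z : ℕ, l ≤ z → (c * u ^ z * d⁻¹ ∈ G ↔ c * u ^ (z + k) * d⁻¹ ∈ G) := by
  classical
  -- representative function
  set rep : H → H := fun h => (hrep h).choose with hrepdef
  have repC : ∀ h : H, rep h ∈ C := fun h => (hrep h).choose_spec.1.1
  have repG : ∀ h : H, h * (rep h)⁻¹ ∈ G := fun h => (hrep h).choose_spec.1.2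
  have repU : ∀ h c' : H, c' ∈ C → h * c'⁻¹ ∈ G → c' = rep h :=
    fun h c' h1 h2 => (hrep h).choose_spec.2 c' ⟨h1, h2⟩
  -- the orbit sequence
  let a : ℕ → H := fun n => Nat.rec c (fun _ x => rep (x * u)) n
  have ha0 : a 0 = c := rfl
  have haS : ∀ n, a (n + 1) = rep (a n * u) := fun n => rfl
  have hkey : ∀ n, a n ∈ C ∧ c * u ^ n * (a n)⁻¹ ∈ G := by
    intro n
    induction n with
    | zero => exact ⟨hc, by simpa [ha0] using G.one_mem⟩
    | succ n ih =>
      refine ⟨repC _, ?_⟩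
      have h2 := repG (a n * u)
      have : c * u ^ (n + 1) * (a (n + 1))⁻¹ =
          (c * u ^ n * (a n)⁻¹) * (a n * u * (rep (a n * u))⁻¹) := by
        rw [haS]; group
      rw [this]
      exact G.mul_mem ih.2 h2
  have hiff : ∀ z : ℕ, (c * u ^ z * d⁻¹ ∈ G ↔ a z = d) := by
    intro z
    constructor
    · intro hmem
      have := repU (c * u ^ z) d hd hmem
      have h2 := repU (c * u ^ z) (a z) (hkey z).1 (hkey z).2
      rw [this, ← h2]
    · rintro rfl; exact (hkey z).2
  -- pigeonhole
  obtain ⟨i, hi, j, hj, hne, heq⟩ :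
      ∃ i ∈ Finset.range (l + 1), ∃ j ∈ Finset.range (l + 1), i ≠ j ∧ a i = a j := by
    apply Finset.exists_ne_map_eq_of_card_lt_of_maps_to (t := C)
    · simp [hcard]
    · intro x _; exact (hkey x).1
  simp only [Finset.mem_range, Nat.lt_succ_iff] at hi hj
  -- wlog i < j
  obtain ⟨i, j, hij, hjl, heq⟩ : ∃ i j : ℕ, i < j ∧ j ≤ l ∧ a i = a j := by
    rcases lt_or_gt_of_ne hne with h | h
    · exact ⟨i, j, h, hj, heq⟩
    · exact ⟨j, i, h, hi, heq.symm⟩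
  refine ⟨j - i, by omega, by omega, ?_⟩
  have hper : ∀ m, a (i + m + (j - i)) = a (i + m) := by
    intro m
    induction m with
    | zero => simp only [Nat.add_zero]; rw [show i + (j - i) = j by omega, heq]
    | succ m ih =>
      have : i + (m + 1) + (j - i) = (i + m + (j - i)) + 1 := by omega
      rw [this, haS, ih, ← haS, show i + (m + 1) = i + m + 1 by omega]
  intro z hz
  have : a (z + (j - i)) = a z := by
    have h := hper (z - i)
    rw [show i + (z - i) = z by omega] at h
    exact h
  rw [hiff, hiff, this]
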